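/- (Golay-array-pair closure under two-dimensional expansion.) Let L, K, N, M ≥ 1, let (U, V) be a Golay complementary array pair of unimodular L×K matrices, and let (W_PA, W_PB) be a Golay complementary array pair of unimodular N×M matrices. Define 2LN×KM matrices W_A, W_B by: for 0 ≤ l ≤ L−1, 0 ≤ k ≤ K−1, 0 ≤ n ≤ N−1, 0 ≤ m ≤ M−1, W_A(lN+n, kM+m) = U(l,k)·W_PA(n,m), W_A(LN+lN+n, kM+m) = −V(l,k)·conj(W_PB(N−1−n, M−1−m)), W_B(lN+n, kM+m) = U(l,k)·W_PB(n,m), W_B(LN+lN+n, kM+m) = V(l,k)·conj(W_PA(N−1−n, M−1−m)). Then (W_A, W_B) is itself a Golay complementary array pair of unimodular 2LN×KM matrices. -/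

import Mathlib

/-- The one-dimensional array factor of a length-`M` sequence `u` at spatial
frequency `ψ`: `F_u(ψ) = Σ_{m=0}^{M-1} u(m) · exp(i·m·ψ)`. -/
noncomputable def arrayFactor (M : ℕ) (u : ℕ → ℂ) (ψ : ℝ) : ℂ :=
  ∑ m ∈ Finset.range M, u m * Complex.exp (Complex.I * (m : ℂ) * (ψ : ℂ))

/-- The aperiodic autocorrelation of a length-`M` sequence `u` at shift `τ`:
`R_u(τ) = Σ_{m=0}^{M-1-τ} u(m) · conj(u(m+τ))`. -/
noncomputable def aacf (M : ℕ) (u : ℕ → ℂ) (τ : ℕ) : ℂ :=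
  ∑ m ∈ Finset.range (M - τ), u m * (starRingEnd ℂ) (u (m + τ))

/-- The two-dimensional array factor of an `N×M` matrix `W` at `(ψ_y, ψ_z)`:
`F_W(ψ_y,ψ_z) = Σ_{n=0}^{N-1} Σ_{m=0}^{M-1} W(n,m) · exp(i·(n·ψ_z + m·ψ_y))`. -/
noncomputable def arrayFactor2 (N M : ℕ) (W : ℕ → ℕ → ℂ) (ψy ψz : ℝ) : ℂ :=
  ∑ n ∈ Finset.range N, ∑ m ∈ Finset.range M,
    W n m * Complex.exp (Complex.I * ((n : ℂ) * (ψz : ℂ) + (m : ℂ) * (ψy : ℂ)))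

/-- The two-dimensional aperiodic autocorrelation of an `N×M` matrix `W` at integer
shifts `(τ_n, τ_m)`: the sum of `W(n,m)·conj(W(n+τ_n, m+τ_m))` over all pairs
`(n,m)` with `0 ≤ n, n+τ_n ≤ N−1` and `0 ≤ m, m+τ_m ≤ M−1`. -/
noncomputable def aacf2 (N M : ℕ) (W : ℕ → ℕ → ℂ) (τn τm : ℤ) : ℂ :=
  ∑ n ∈ Finset.range N, ∑ m ∈ Finset.range M,
    if 0 ≤ (n : ℤ) + τn ∧ (n : ℤ) + τn < (N : ℤ) ∧
        0 ≤ (m : ℤ) + τm ∧ (m : ℤ) + τm < (M : ℤ) then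
      W n m * (starRingEnd ℂ) (W ((n : ℤ) + τn).toNat ((m : ℤ) + τm).toNat)
    else 0

/-- `(U, V)` is a Golay complementary array pair of `N×M` matrices: the sum of their
two-dimensional aperiodic autocorrelations vanishes at every nonzero shift. -/
def IsGolayArrayPair (N M : ℕ) (U V : ℕ → ℕ → ℂ) : Prop :=
  ∀ τn τm : ℤ, |τn| ≤ (N : ℤ) - 1 → |τm| ≤ (M : ℤ) - 1 → ¬(τn = 0 ∧ τm = 0) →
    aacf2 N M U τn τm + aacf2 N M V τn τm = 0

open Finset

noncomputable section GolayAux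

/-- Zero extension of an `N×M` matrix to `ℤ×ℤ`. -/
def zext (N M : ℕ) (W : ℕ → ℕ → ℂ) : ℤ → ℤ → ℂ := fun x y =>
  if 0 ≤ x ∧ x < (N:ℤ) ∧ 0 ≤ y ∧ y < (M:ℤ) then W x.toNat y.toNat else 0

/-- Support predicate: `f` vanishes outside the `N×M` box. -/
def Supp (N M : ℕ) (f : ℤ → ℤ → ℂ) : Prop :=
  ∀ x y : ℤ, ¬(0 ≤ x ∧ x < (N:ℤ) ∧ 0 ≤ y ∧ y < (M:ℤ)) → f x y = 0

/-- Kronecker-type expansion. -/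
def kronZ (N M : ℕ) (u p : ℤ → ℤ → ℂ) : ℤ → ℤ → ℂ := fun x y =>
  u (x / (N:ℤ)) (y / (M:ℤ)) * p (x % (N:ℤ)) (y % (M:ℤ))

/-- Conjugate reversal. -/
def revZ (N M : ℕ) (p : ℤ → ℤ → ℂ) : ℤ → ℤ → ℂ := fun x y =>
  (starRingEnd ℂ) (p ((N:ℤ) - 1 - x) ((M:ℤ) - 1 - y))

/-- Correlation over the `N×M` box. -/
def corBox (N M : ℕ) (f g : ℤ → ℤ → ℂ) (τn τm : ℤ) : ℂ :=
  ∑ n ∈ Finset.range N, ∑ m ∈ Finset.range M,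
    f n m * (starRingEnd ℂ) (g ((n:ℤ) + τn) ((m:ℤ) + τm))

/-- Reflection bilinear form. -/
def Tsum (N M : ℕ) (f g : ℤ → ℤ → ℂ) (cn cm : ℤ) : ℂ :=
  ∑ n ∈ Finset.range N, ∑ m ∈ Finset.range M,
    f n m * g (cn - (n:ℤ)) (cm - (m:ℤ))

lemma zext_supp (N M : ℕ) (W : ℕ → ℕ → ℂ) : Supp N M (zext N M W) := by
  intro x y h; simp only [zext, if_neg h]

lemma revZ_supp (N M : ℕ) (f : ℤ → ℤ → ℂ) (hf : Supp N M f) : Supp N M (revZ N M f) := by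
  intro x y h
  unfold revZ
  rw [hf _ _ (by intro hc; exact h (by omega)), map_zero]

section
variable {β : Type*} [AddCommMonoid β]

lemma sum_range_mul (L N : ℕ) (F : ℕ → β) :
    ∑ x ∈ range (L*N), F x = ∑ l ∈ range L, ∑ n ∈ range N, F (l*N+n) := by
  induction L with
  | zero => simp
  | succ L ih =>
    rw [sum_range_succ, ← ih, show (L+1)*N = L*N + N by ring, range_eq_Ico,
      ← sum_Ico_consecutive _ (Nat.zero_le _) (by omega : L*N ≤ L*N + N), ← range_eq_Ico,
      sum_Ico_eq_sum_range]
    congr 1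
    refine sum_congr (by congr 1; omega) fun k _ => rfl

end

lemma split1 (N : ℕ) (hN : 0 < N) (l n : ℕ) (hn : n < N) (τ : ℤ) :
    ∃ e : ℤ, (e = 0 ∨ e = 1) ∧ 0 ≤ (n:ℤ) + τ % N - e*N ∧ (n:ℤ) + τ % N - e*N < N ∧
      (((l*N+n : ℕ):ℤ) + τ) / N = (l:ℤ) + τ/N + e ∧
      (((l*N+n : ℕ):ℤ) + τ) % N = (n:ℤ) + τ % N - e*N := by
  have hNz : (N:ℤ) ≠ 0 := by exact_mod_cast hN.ne'
  have hN' : (0:ℤ) < N := by exact_mod_cast hN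
  have hm0 : 0 ≤ τ % N := Int.emod_nonneg τ hNz
  have hmN : τ % N < N := Int.emod_lt_of_pos τ hN'
  have hde := Int.mul_ediv_add_emod τ N
  have hcast : ((l*N+n : ℕ):ℤ) = (l:ℤ)*N + n := by push_cast; ring
  by_cases h : (n:ℤ) + τ % N < N
  · have hX : ((l*N+n : ℕ):ℤ) + τ = ((n:ℤ) + τ % N) + ((l:ℤ) + τ/N) * N := by
      rw [hcast]; linarith
    have hdiv : (((l*N+n : ℕ):ℤ) + τ) / N = (l:ℤ) + τ/N := by
      rw [hX, Int.add_mul_ediv_right _ _ hNz, Int.ediv_eq_zero_of_lt (by omega) h, zero_add]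
    have hmod : (((l*N+n : ℕ):ℤ) + τ) % N = (n:ℤ) + τ % N := by
      rw [hX, Int.add_mul_emod_self_right, Int.emod_eq_of_lt (by omega) h]
    exact ⟨0, Or.inl rfl, by omega, by omega, by omega, by omega⟩
  · have hX : ((l*N+n : ℕ):ℤ) + τ = ((n:ℤ) + τ % N - N) + ((l:ℤ) + τ/N + 1) * N := by
      rw [hcast]; linarith
    have hdiv : (((l*N+n : ℕ):ℤ) + τ) / N = (l:ℤ) + τ/N + 1 := by
      rw [hX, Int.add_mul_ediv_right _ _ hNz, Int.ediv_eq_zero_of_lt (by omega) (by omega),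
        zero_add]
    have hmod : (((l*N+n : ℕ):ℤ) + τ) % N = (n:ℤ) + τ % N - N := by
      rw [hX, Int.add_mul_emod_self_right, Int.emod_eq_of_lt (by omega) (by omega)]
    exact ⟨1, Or.inr rfl, by omega, by omega, by omega, by omega⟩

lemma grid_div (N : ℕ) (hN : 0 < N) (l n : ℕ) (hn : n < N) :
    (((l*N+n : ℕ):ℤ)) / N = l ∧ (((l*N+n:ℕ):ℤ)) % N = n := by
  obtain ⟨e, he, h1, h2, h3, h4⟩ := split1 N hN l n hn 0
  have : (0:ℤ) % N = 0 := Int.zero_emod _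
  have : (0:ℤ) / N = 0 := Int.zero_ediv _
  have he0 : e = 0 := by
    rcases he with rfl | rfl
    · rfl
    · omega
  subst he0
  simp only [add_zero] at h3 h4
  constructor <;> omega

lemma corBox_neg_left (N M : ℕ) (f g : ℤ → ℤ → ℂ) (τn τm : ℤ) :
    corBox N M (fun x y => -(f x y)) g τn τm = -(corBox N M f g τn τm) := by
  simp [corBox, neg_mul, Finset.sum_neg_distrib]

lemma corBox_neg_right (N M : ℕ) (f g : ℤ → ℤ → ℂ) (τn τm : ℤ) :
    corBox N M f (fun x y => -(g x y)) τn τm = -(corBox N M f g τn τm) := by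
  simp [corBox, map_neg, mul_neg, Finset.sum_neg_distrib]

lemma corBox_add_left (N M : ℕ) (f1 f2 g : ℤ → ℤ → ℂ) (τn τm : ℤ) :
    corBox N M (fun x y => f1 x y + f2 x y) g τn τm
      = corBox N M f1 g τn τm + corBox N M f2 g τn τm := by
  simp [corBox, add_mul, Finset.sum_add_distrib]

lemma corBox_add_right (N M : ℕ) (f g1 g2 : ℤ → ℤ → ℂ) (τn τm : ℤ) :
    corBox N M f (fun x y => g1 x y + g2 x y) τn τm
      = corBox N M f g1 τn τm + corBox N M f g2 τn τm := by
  simp [corBox, map_add, mul_add, Finset.sum_add_distrib]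

lemma corBox_extend (H C : ℕ) (f g : ℤ → ℤ → ℂ)
    (hf : ∀ x y : ℤ, ((H:ℕ):ℤ) ≤ x → f x y = 0) (τn τm : ℤ) :
    corBox (2*H) C f g τn τm = corBox H C f g τn τm := by
  unfold corBox
  rw [show 2*H = H + H by ring, Finset.sum_range_add]
  have h0 : ∑ x ∈ range H, ∑ m ∈ range C,
      f ((H + x : ℕ):ℤ) ((m:ℕ):ℤ) * (starRingEnd ℂ) (g (((H+x:ℕ):ℤ) + τn) (((m:ℕ):ℤ) + τm)) = 0 := by
    refine sum_eq_zero fun x hx => sum_eq_zero fun m _ => ?_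
    have hx' : (H:ℤ) ≤ ((H + x : ℕ):ℤ) := by omega
    rw [hf _ _ hx', zero_mul]
  rw [h0, add_zero]

lemma corBox_shift_g (Nn C H : ℕ) (f q : ℤ → ℤ → ℂ) (τn τm : ℤ) :
    corBox Nn C f (fun x y => q (x - ((H:ℕ):ℤ)) y) τn τm
      = corBox Nn C f q (τn - (H:ℤ)) τm := by
  unfold corBox
  refine sum_congr rfl fun n _ => sum_congr rfl fun m _ => ?_
  simp only []
  rw [add_sub_assoc]

lemma corBox_shift_f (H C : ℕ) (q g : ℤ → ℤ → ℂ)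
    (hq : ∀ x y : ℤ, x < 0 → q x y = 0) (τn τm : ℤ) :
    corBox (2*H) C (fun x y => q (x - ((H:ℕ):ℤ)) y) g τn τm
      = corBox H C q g (τn + (H:ℤ)) τm := by
  unfold corBox
  rw [show 2*H = H + H by ring, Finset.sum_range_add]
  have h0 : ∑ x ∈ range H, ∑ m ∈ range C,
      (fun x y => q (x - ((H:ℕ):ℤ)) y) ((x:ℕ):ℤ) ((m:ℕ):ℤ)
        * (starRingEnd ℂ) (g (((x:ℕ):ℤ) + τn) (((m:ℕ):ℤ) + τm)) = 0 := by
    refine sum_eq_zero fun x hx => sum_eq_zero fun m _ => ?_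
    have hx' : ((x:ℕ):ℤ) - (H:ℤ) < 0 := by
      have := mem_range.mp hx; omega
    simp only []
    rw [hq _ _ hx', zero_mul]
  rw [h0, zero_add]
  refine sum_congr rfl fun x _ => sum_congr rfl fun m _ => ?_
  simp only []
  have e1 : ((H + x : ℕ) : ℤ) - (H:ℤ) = (x:ℤ) := by push_cast; ring
  have e2 : ((H + x : ℕ) : ℤ) + τn = (x:ℤ) + (τn + (H:ℤ)) := by push_cast; ring
  rw [e1, e2]

lemma corBox_out (N M : ℕ) (f g : ℤ → ℤ → ℂ) (hg : Supp N M g) (τn τm : ℤ)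
    (h : ¬(|τn| ≤ (N:ℤ) - 1 ∧ |τm| ≤ (M:ℤ) - 1)) : corBox N M f g τn τm = 0 := by
  unfold corBox
  refine sum_eq_zero fun n hn => sum_eq_zero fun m hm => ?_
  have hn' := mem_range.mp hn
  have hm' := mem_range.mp hm
  rw [not_and_or, not_le, not_le] at h
  have habs : ∀ t : ℤ, |t| = t ∨ |t| = -t := fun t => abs_choice t
  rw [hg _ _ ?_, map_zero, mul_zero]
  rcases h with h | h
  · rcases habs τn with he | he <;> rw [he] at h <;>
      (rintro ⟨c1, c2, c3, c4⟩; omega)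
  · rcases habs τm with he | he <;> rw [he] at h <;>
      (rintro ⟨c1, c2, c3, c4⟩; omega)

lemma corBox_self_zero (N M : ℕ) (W : ℕ → ℕ → ℂ)
    (hW : ∀ n < N, ∀ m < M, ‖W n m‖ = 1) :
    corBox N M (zext N M W) (zext N M W) 0 0 = (N:ℂ) * (M:ℂ) := by
  unfold corBox
  have key : ∀ n ∈ range N, ∀ m ∈ range M,
      zext N M W ((n:ℕ):ℤ) ((m:ℕ):ℤ)
        * (starRingEnd ℂ) (zext N M W (((n:ℕ):ℤ) + 0) (((m:ℕ):ℤ) + 0)) = 1 := by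
    intro n hn m hm
    have hn' := mem_range.mp hn
    have hm' := mem_range.mp hm
    have hc : (0:ℤ) ≤ (n:ℤ) ∧ (n:ℤ) < (N:ℤ) ∧ (0:ℤ) ≤ (m:ℤ) ∧ (m:ℤ) < (M:ℤ) := by omega
    rw [add_zero, add_zero]
    rw [show zext N M W ((n:ℕ):ℤ) ((m:ℕ):ℤ) = W n m by
      unfold zext; rw [if_pos hc]; simp]
    rw [Complex.mul_conj]
    rw [← Complex.sq_norm, hW n hn' m hm']
    norm_num
  calc ∑ n ∈ range N, ∑ m ∈ range M,
        zext N M W ((n:ℕ):ℤ) ((m:ℕ):ℤ)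
          * (starRingEnd ℂ) (zext N M W (((n:ℕ):ℤ) + 0) (((m:ℕ):ℤ) + 0))
      = ∑ n ∈ range N, ∑ m ∈ range M, (1:ℂ) :=
        sum_congr rfl fun n hn => sum_congr rfl fun m hm => key n hn m hm
    _ = (N:ℂ) * (M:ℂ) := by simp [mul_comm]

lemma sum_range_cast (N : ℕ) (F : ℤ → ℂ) :
    ∑ n ∈ range N, F ((n:ℕ):ℤ) = ∑ x ∈ Finset.Icc (0:ℤ) ((N:ℤ)-1), F x := by
  refine sum_nbij' (fun n => ((n:ℕ):ℤ)) (fun x => x.toNat) ?_ ?_ ?_ ?_ ?_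
  · intro a ha; have := mem_range.mp ha; simp only [Finset.mem_Icc]; omega
  · intro x hx; have := Finset.mem_Icc.mp hx; simp only [mem_range]; omega
  · intro a _; simp
  · intro x hx; have := Finset.mem_Icc.mp hx; omega
  · intro a _; rfl

lemma sum_Icc_reflect (lo hi c : ℤ) (hc : lo + hi = c) (F : ℤ → ℂ) :
    ∑ x ∈ Finset.Icc lo hi, F x = ∑ x ∈ Finset.Icc lo hi, F (c - x) := by
  refine sum_nbij' (fun x => c - x) (fun x => c - x) ?_ ?_ ?_ ?_ ?_
  · intro a ha; have := Finset.mem_Icc.mp ha; simp only [Finset.mem_Icc]; omega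
  · intro a ha; have := Finset.mem_Icc.mp ha; simp only [Finset.mem_Icc]; omega
  · intro a _; omega
  · intro a _; omega
  · intro a _; rw [show c - (c - a) = a by ring]

lemma Tsum_comm (N M : ℕ) (f g : ℤ → ℤ → ℂ) (hf : Supp N M f) (hg : Supp N M g)
    (cn cm : ℤ) : Tsum N M f g cn cm = Tsum N M g f cn cm := by
  set lon : ℤ := min 0 (cn - ((N:ℤ)-1)) with hlon
  set lom : ℤ := min 0 (cm - ((M:ℤ)-1)) with hlom
  set hin : ℤ := cn - lon with hhin
  set him : ℤ := cm - lom with hhim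
  have hb1 : lon ≤ 0 ∧ ((N:ℤ)-1) ≤ hin := by omega
  have hb2 : lom ≤ 0 ∧ ((M:ℤ)-1) ≤ him := by omega
  have key : ∀ u v : ℤ → ℤ → ℂ, Supp N M u →
      Tsum N M u v cn cm
        = ∑ x ∈ Finset.Icc lon hin, ∑ y ∈ Finset.Icc lom him,
            u x y * v (cn - x) (cm - y) := by
    intro u v hu
    unfold Tsum
    calc ∑ n ∈ range N, ∑ m ∈ range M, u ((n:ℕ):ℤ) ((m:ℕ):ℤ)
            * v (cn - ((n:ℕ):ℤ)) (cm - ((m:ℕ):ℤ))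
        = ∑ x ∈ Finset.Icc (0:ℤ) ((N:ℤ)-1), ∑ m ∈ range M,
            u x ((m:ℕ):ℤ) * v (cn - x) (cm - ((m:ℕ):ℤ)) :=
          sum_range_cast N (fun x => ∑ m ∈ range M, u x ((m:ℕ):ℤ) * v (cn - x) (cm - ((m:ℕ):ℤ)))
      _ = ∑ x ∈ Finset.Icc (0:ℤ) ((N:ℤ)-1), ∑ y ∈ Finset.Icc (0:ℤ) ((M:ℤ)-1),
            u x y * v (cn - x) (cm - y) :=
          sum_congr rfl fun x _ => sum_range_cast M (fun y => u x y * v (cn - x) (cm - y))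
      _ = ∑ x ∈ Finset.Icc (0:ℤ) ((N:ℤ)-1), ∑ y ∈ Finset.Icc lom him,
            u x y * v (cn - x) (cm - y) := by
          refine sum_congr rfl fun x _ => Finset.sum_subset
            (Finset.Icc_subset_Icc (by omega) (by omega)) fun y hy hny => ?_
          rw [Finset.mem_Icc] at hy
          rw [Finset.mem_Icc] at hny
          rw [hu x y (by rintro ⟨c1, c2, c3, c4⟩; omega), zero_mul]
      _ = ∑ x ∈ Finset.Icc lon hin, ∑ y ∈ Finset.Icc lom him,
            u x y * v (cn - x) (cm - y) := by
          refine Finset.sum_subset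
            (Finset.Icc_subset_Icc (by omega) (by omega)) fun x hx hnx => ?_
          rw [Finset.mem_Icc] at hx
          rw [Finset.mem_Icc] at hnx
          refine sum_eq_zero fun y _ => ?_
          rw [hu x y (by rintro ⟨c1, c2, c3, c4⟩; omega), zero_mul]
  rw [key f g hf, key g f hg]
  rw [sum_Icc_reflect lon hin cn (by omega)
    (fun x => ∑ y ∈ Finset.Icc lom him, f x y * g (cn - x) (cm - y))]
  refine sum_congr rfl fun x _ => ?_
  rw [sum_Icc_reflect lom him cm (by omega)
    (fun y => f (cn - x) y * g (cn - (cn - x)) (cm - y))]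
  refine sum_congr rfl fun y _ => ?_
  rw [show cn - (cn - x) = x by ring, show cm - (cm - y) = y by ring, mul_comm]

lemma corBox_rev_right (N M : ℕ) (f g : ℤ → ℤ → ℂ) (σn σm : ℤ) :
    corBox N M f (revZ N M g) σn σm = Tsum N M f g ((N:ℤ)-1-σn) ((M:ℤ)-1-σm) := by
  unfold corBox revZ Tsum
  refine sum_congr rfl fun n _ => sum_congr rfl fun m _ => ?_
  rw [Complex.conj_conj, show (N:ℤ)-1-(((n:ℕ):ℤ)+σn) = (N:ℤ)-1-σn-((n:ℕ):ℤ) by ring,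
    show (M:ℤ)-1-(((m:ℕ):ℤ)+σm) = (M:ℤ)-1-σm-((m:ℕ):ℤ) by ring]

lemma corBox_rev_left (N M : ℕ) (f g : ℤ → ℤ → ℂ) (σn σm : ℤ) :
    corBox N M (revZ N M f) g σn σm
      = (starRingEnd ℂ) (Tsum N M f g ((N:ℤ)-1+σn) ((M:ℤ)-1+σm)) := by
  unfold corBox revZ Tsum
  rw [map_sum]
  conv_lhs => rw [← Finset.sum_range_reflect]
  refine sum_congr rfl fun n hn => ?_
  have hn' := mem_range.mp hn
  rw [map_sum]
  conv_lhs => rw [← Finset.sum_range_reflect]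
  refine sum_congr rfl fun m hm => ?_
  have hm' := mem_range.mp hm
  rw [map_mul]
  have e1 : (N:ℤ)-1-(((N-1-n : ℕ):ℕ):ℤ) = ((n:ℕ):ℤ) := by omega
  have e2 : (((N-1-n : ℕ):ℕ):ℤ) + σn = (N:ℤ)-1+σn-((n:ℕ):ℤ) := by omega
  have e3 : (M:ℤ)-1-(((M-1-m : ℕ):ℕ):ℤ) = ((m:ℕ):ℤ) := by omega
  have e4 : (((M-1-m : ℕ):ℕ):ℤ) + σm = (M:ℤ)-1+σm-((m:ℕ):ℤ) := by omega
  rw [e1, e2, e3, e4]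

lemma corBox_rev_rev (N M : ℕ) (f g : ℤ → ℤ → ℂ) (σn σm : ℤ) :
    corBox N M (revZ N M f) (revZ N M g) σn σm
      = (starRingEnd ℂ) (corBox N M f g (-σn) (-σm)) := by
  unfold corBox revZ
  rw [map_sum]
  conv_lhs => rw [← Finset.sum_range_reflect]
  refine sum_congr rfl fun n hn => ?_
  have hn' := mem_range.mp hn
  rw [map_sum]
  conv_lhs => rw [← Finset.sum_range_reflect]
  refine sum_congr rfl fun m hm => ?_
  have hm' := mem_range.mp hm
  rw [map_mul, Complex.conj_conj, Complex.conj_conj]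
  have e1 : (N:ℤ)-1-(((N-1-n : ℕ):ℕ):ℤ) = ((n:ℕ):ℤ) := by omega
  have e2 : (N:ℤ)-1-((((N-1-n : ℕ):ℕ):ℤ) + σn) = ((n:ℕ):ℤ) + -σn := by omega
  have e3 : (M:ℤ)-1-(((M-1-m : ℕ):ℕ):ℤ) = ((m:ℕ):ℤ) := by omega
  have e4 : (M:ℤ)-1-((((M-1-m : ℕ):ℕ):ℤ) + σm) = ((m:ℕ):ℤ) + -σm := by omega
  rw [e1, e2, e3, e4]

lemma kron_row_lo (L K N M : ℕ) (hN : 0 < N) (u p : ℤ → ℤ → ℂ) (hu : Supp L K u) :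
    ∀ x y : ℤ, x < 0 → kronZ N M u p x y = 0 := by
  intro x y hx
  unfold kronZ
  rw [hu _ _ ?_, zero_mul]
  rintro ⟨c1, c2, c3, c4⟩
  have : x / (N:ℤ) < 0 := Int.ediv_neg_of_neg_of_pos hx (by exact_mod_cast hN)
  omega

lemma kron_row_hi (L K N M : ℕ) (hN : 0 < N) (u p : ℤ → ℤ → ℂ) (hu : Supp L K u) :
    ∀ x y : ℤ, ((L*N : ℕ):ℤ) ≤ x → kronZ N M u p x y = 0 := by
  intro x y hx
  unfold kronZ
  rw [hu _ _ ?_, zero_mul]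
  rintro ⟨c1, c2, c3, c4⟩
  have : (L:ℤ) ≤ x / (N:ℤ) := by
    rw [Int.le_ediv_iff_mul_le (by exact_mod_cast hN)]
    push_cast at hx
    linarith
  omega

lemma kron_apply (N M : ℕ) (hN : 0 < N) (hM : 0 < M) (u p : ℤ → ℤ → ℂ)
    (l k n m : ℕ) (hn : n < N) (hm : m < M) :
    kronZ N M u p ((l*N+n : ℕ):ℤ) ((k*M+m : ℕ):ℤ) = u ((l:ℕ):ℤ) ((k:ℕ):ℤ) * p ((n:ℕ):ℤ) ((m:ℕ):ℤ) := by
  unfold kronZ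
  rw [(grid_div N hN l n hn).1, (grid_div N hN l n hn).2,
    (grid_div M hM k m hm).1, (grid_div M hM k m hm).2]

lemma kron_shift (N M : ℕ) (hN : 0 < N) (hM : 0 < M) (u p : ℤ → ℤ → ℂ) (hp : Supp N M p)
    (l k n m : ℕ) (hn : n < N) (hm : m < M) (τn τm : ℤ) :
    kronZ N M u p (((l*N+n : ℕ):ℤ) + τn) (((k*M+m : ℕ):ℤ) + τm)
    = u ((l:ℤ) + τn/N) ((k:ℤ) + τm/M) * p ((n:ℤ) + τn%N) ((m:ℤ) + τm%M)
    + u ((l:ℤ) + τn/N) ((k:ℤ) + τm/M + 1) * p ((n:ℤ) + τn%N) ((m:ℤ) + τm%M - M)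
    + u ((l:ℤ) + τn/N + 1) ((k:ℤ) + τm/M) * p ((n:ℤ) + τn%N - N) ((m:ℤ) + τm%M)
    + u ((l:ℤ) + τn/N + 1) ((k:ℤ) + τm/M + 1) * p ((n:ℤ) + τn%N - N) ((m:ℤ) + τm%M - M) := by
  obtain ⟨e, he, he1, he2, he3, he4⟩ := split1 N hN l n hn τn
  obtain ⟨f, hf, hf1, hf2, hf3, hf4⟩ := split1 M hM k m hm τm
  unfold kronZ
  rw [he3, he4, hf3, hf4]
  have hb0 : 0 ≤ τn % N := Int.emod_nonneg τn (by exact_mod_cast hN.ne')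
  have hbN : τn % N < N := Int.emod_lt_of_pos τn (by exact_mod_cast hN)
  have hd0 : 0 ≤ τm % M := Int.emod_nonneg τm (by exact_mod_cast hM.ne')
  have hdM : τm % M < M := Int.emod_lt_of_pos τm (by exact_mod_cast hM)
  rcases he with rfl | rfl <;> rcases hf with rfl | rfl
  · rw [hp ((n:ℤ) + τn%N - N) ((m:ℤ) + τm%M) (by rintro ⟨c1,c2,c3,c4⟩; omega),
      hp ((n:ℤ) + τn%N - N) ((m:ℤ) + τm%M - M) (by rintro ⟨c1,c2,c3,c4⟩; omega),
      hp ((n:ℤ) + τn%N) ((m:ℤ) + τm%M - M) (by rintro ⟨c1,c2,c3,c4⟩; omega)]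
    simp only [mul_zero, add_zero, zero_mul]
    norm_num
  · rw [hp ((n:ℤ) + τn%N - N) ((m:ℤ) + τm%M) (by rintro ⟨c1,c2,c3,c4⟩; omega),
      hp ((n:ℤ) + τn%N - N) ((m:ℤ) + τm%M - M) (by rintro ⟨c1,c2,c3,c4⟩; omega),
      hp ((n:ℤ) + τn%N) ((m:ℤ) + τm%M) (by rintro ⟨c1,c2,c3,c4⟩; omega)]
    simp only [mul_zero, add_zero, zero_add, zero_mul]
    norm_num
  · rw [hp ((n:ℤ) + τn%N) ((m:ℤ) + τm%M) (by rintro ⟨c1,c2,c3,c4⟩; omega),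
      hp ((n:ℤ) + τn%N) ((m:ℤ) + τm%M - M) (by rintro ⟨c1,c2,c3,c4⟩; omega),
      hp ((n:ℤ) + τn%N - N) ((m:ℤ) + τm%M - M) (by rintro ⟨c1,c2,c3,c4⟩; omega)]
    simp only [mul_zero, add_zero, zero_add, zero_mul]
    norm_num
  · rw [hp ((n:ℤ) + τn%N) ((m:ℤ) + τm%M) (by rintro ⟨c1,c2,c3,c4⟩; omega),
      hp ((n:ℤ) + τn%N) ((m:ℤ) + τm%M - M) (by rintro ⟨c1,c2,c3,c4⟩; omega),
      hp ((n:ℤ) + τn%N - N) ((m:ℤ) + τm%M) (by rintro ⟨c1,c2,c3,c4⟩; omega)]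
    simp only [mul_zero, add_zero, zero_add, zero_mul]
    norm_num

lemma sum_factor (L K N M : ℕ) (A : ℕ → ℕ → ℂ) (B : ℕ → ℕ → ℂ) :
    (∑ l ∈ range L, ∑ k ∈ range K, A l k) * (∑ n ∈ range N, ∑ m ∈ range M, B n m)
    = ∑ l ∈ range L, ∑ n ∈ range N, ∑ k ∈ range K, ∑ m ∈ range M, A l k * B n m := by
  rw [sum_mul_sum]
  refine sum_congr rfl fun l _ => sum_congr rfl fun n _ => ?_
  rw [sum_mul_sum]

lemma kron_corr (L K N M : ℕ) (hN : 0 < N) (hM : 0 < M) (u u' p p' : ℤ → ℤ → ℂ)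
    (hp' : Supp N M p') (τn τm : ℤ) :
    corBox (L*N) (K*M) (kronZ N M u p) (kronZ N M u' p') τn τm =
      corBox L K u u' (τn/N) (τm/M) * corBox N M p p' (τn%N) (τm%M)
    + corBox L K u u' (τn/N) (τm/M + 1) * corBox N M p p' (τn%N) (τm%M - M)
    + corBox L K u u' (τn/N + 1) (τm/M) * corBox N M p p' (τn%N - N) (τm%M)
    + corBox L K u u' (τn/N + 1) (τm/M + 1) * corBox N M p p' (τn%N - N) (τm%M - M) := by
  unfold corBox
  rw [sum_range_mul L N (fun x => ∑ y ∈ range (K*M),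
    kronZ N M u p ((x:ℕ):ℤ) ((y:ℕ):ℤ)
      * (starRingEnd ℂ) (kronZ N M u' p' (((x:ℕ):ℤ) + τn) (((y:ℕ):ℤ) + τm)))]
  have step2 : ∀ l ∈ range L, ∀ n ∈ range N,
      ∑ y ∈ range (K*M), kronZ N M u p ((l*N+n : ℕ):ℤ) ((y:ℕ):ℤ)
        * (starRingEnd ℂ) (kronZ N M u' p' (((l*N+n : ℕ):ℤ) + τn) (((y:ℕ):ℤ) + τm))
      = ∑ k ∈ range K, ∑ m ∈ range M,
          ((u ((l:ℕ):ℤ) ((k:ℕ):ℤ) * (starRingEnd ℂ) (u' (((l:ℕ):ℤ) + τn/N) (((k:ℕ):ℤ) + τm/M)))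
            * (p ((n:ℕ):ℤ) ((m:ℕ):ℤ) * (starRingEnd ℂ) (p' (((n:ℕ):ℤ) + τn%N) (((m:ℕ):ℤ) + τm%M)))
          + (u ((l:ℕ):ℤ) ((k:ℕ):ℤ) * (starRingEnd ℂ) (u' (((l:ℕ):ℤ) + τn/N) (((k:ℕ):ℤ) + (τm/M + 1))))
            * (p ((n:ℕ):ℤ) ((m:ℕ):ℤ) * (starRingEnd ℂ) (p' (((n:ℕ):ℤ) + τn%N) (((m:ℕ):ℤ) + (τm%M - M))))
          + (u ((l:ℕ):ℤ) ((k:ℕ):ℤ) * (starRingEnd ℂ) (u' (((l:ℕ):ℤ) + (τn/N + 1)) (((k:ℕ):ℤ) + τm/M)))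
            * (p ((n:ℕ):ℤ) ((m:ℕ):ℤ) * (starRingEnd ℂ) (p' (((n:ℕ):ℤ) + (τn%N - N)) (((m:ℕ):ℤ) + τm%M)))
          + (u ((l:ℕ):ℤ) ((k:ℕ):ℤ) * (starRingEnd ℂ) (u' (((l:ℕ):ℤ) + (τn/N + 1)) (((k:ℕ):ℤ) + (τm/M + 1))))
            * (p ((n:ℕ):ℤ) ((m:ℕ):ℤ) * (starRingEnd ℂ) (p' (((n:ℕ):ℤ) + (τn%N - N)) (((m:ℕ):ℤ) + (τm%M - M))))) := by
    intro l _ n hn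
    have hn' := mem_range.mp hn
    rw [sum_range_mul K M (fun y => kronZ N M u p ((l*N+n : ℕ):ℤ) ((y:ℕ):ℤ)
      * (starRingEnd ℂ) (kronZ N M u' p' (((l*N+n : ℕ):ℤ) + τn) (((y:ℕ):ℤ) + τm)))]
    refine sum_congr rfl fun k _ => sum_congr rfl fun m hm => ?_
    have hm' := mem_range.mp hm
    rw [kron_apply N M hN hM u p l k n m hn' hm',
      kron_shift N M hN hM u' p' hp' l k n m hn' hm' τn τm]
    rw [map_add, map_add, map_add, map_mul, map_mul, map_mul, map_mul]
    ring
  calc ∑ l ∈ range L, ∑ n ∈ range N,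
        ∑ y ∈ range (K*M), kronZ N M u p ((l*N+n : ℕ):ℤ) ((y:ℕ):ℤ)
          * (starRingEnd ℂ) (kronZ N M u' p' (((l*N+n : ℕ):ℤ) + τn) (((y:ℕ):ℤ) + τm))
      = ∑ l ∈ range L, ∑ n ∈ range N, ∑ k ∈ range K, ∑ m ∈ range M,
          ((u ((l:ℕ):ℤ) ((k:ℕ):ℤ) * (starRingEnd ℂ) (u' (((l:ℕ):ℤ) + τn/N) (((k:ℕ):ℤ) + τm/M)))
            * (p ((n:ℕ):ℤ) ((m:ℕ):ℤ) * (starRingEnd ℂ) (p' (((n:ℕ):ℤ) + τn%N) (((m:ℕ):ℤ) + τm%M)))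
          + (u ((l:ℕ):ℤ) ((k:ℕ):ℤ) * (starRingEnd ℂ) (u' (((l:ℕ):ℤ) + τn/N) (((k:ℕ):ℤ) + (τm/M + 1))))
            * (p ((n:ℕ):ℤ) ((m:ℕ):ℤ) * (starRingEnd ℂ) (p' (((n:ℕ):ℤ) + τn%N) (((m:ℕ):ℤ) + (τm%M - M))))
          + (u ((l:ℕ):ℤ) ((k:ℕ):ℤ) * (starRingEnd ℂ) (u' (((l:ℕ):ℤ) + (τn/N + 1)) (((k:ℕ):ℤ) + τm/M)))
            * (p ((n:ℕ):ℤ) ((m:ℕ):ℤ) * (starRingEnd ℂ) (p' (((n:ℕ):ℤ) + (τn%N - N)) (((m:ℕ):ℤ) + τm%M)))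
          + (u ((l:ℕ):ℤ) ((k:ℕ):ℤ) * (starRingEnd ℂ) (u' (((l:ℕ):ℤ) + (τn/N + 1)) (((k:ℕ):ℤ) + (τm/M + 1))))
            * (p ((n:ℕ):ℤ) ((m:ℕ):ℤ) * (starRingEnd ℂ) (p' (((n:ℕ):ℤ) + (τn%N - N)) (((m:ℕ):ℤ) + (τm%M - M))))) :=
        sum_congr rfl fun l hl => sum_congr rfl fun n hn => step2 l hl n hn
    _ = _ := by
        simp only [Finset.sum_add_distrib]
        rw [← sum_factor, ← sum_factor, ← sum_factor, ← sum_factor]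

lemma aacf2_eq_corBox (N M : ℕ) (W : ℕ → ℕ → ℂ) (τn τm : ℤ) :
    aacf2 N M W τn τm = corBox N M (zext N M W) (zext N M W) τn τm := by
  unfold aacf2 corBox
  refine sum_congr rfl fun n hn => sum_congr rfl fun m hm => ?_
  have hn' := mem_range.mp hn
  have hm' := mem_range.mp hm
  by_cases h : 0 ≤ (n : ℤ) + τn ∧ (n : ℤ) + τn < (N : ℤ) ∧
      0 ≤ (m : ℤ) + τm ∧ (m : ℤ) + τm < (M : ℤ)
  · rw [if_pos h]
    have h1 : zext N M W ((n:ℕ):ℤ) ((m:ℕ):ℤ) = W n m := by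
      unfold zext; rw [if_pos (by omega)]; simp
    have h2 : zext N M W (((n:ℕ):ℤ) + τn) (((m:ℕ):ℤ) + τm)
        = W (((n:ℕ):ℤ) + τn).toNat (((m:ℕ):ℤ) + τm).toNat := by
      unfold zext; rw [if_pos h]
    rw [h1, h2]
  · rw [if_neg h]
    have h2 : zext N M W (((n:ℕ):ℤ) + τn) (((m:ℕ):ℤ) + τm) = 0 := by
      unfold zext; rw [if_neg h]
    rw [h2, map_zero, mul_zero]

lemma zext_block (L K N M : ℕ) (hN : 0 < N) (hM : 0 < M)
    (W : ℕ → ℕ → ℂ) (u v : ℕ → ℕ → ℂ) (pt : ℕ → ℕ → ℂ) (pb : ℤ → ℤ → ℂ)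
    (hpb : Supp N M pb)
    (h1 : ∀ l < L, ∀ k < K, ∀ n < N, ∀ m < M,
      W (l*N+n) (k*M+m) = u l k * pt n m)
    (h2 : ∀ l < L, ∀ k < K, ∀ n < N, ∀ m < M,
      W (L*N + l*N + n) (k*M+m) = v l k * pb ((n:ℕ):ℤ) ((m:ℕ):ℤ)) :
    ∀ x y : ℤ, zext (2*(L*N)) (K*M) W x y =
      kronZ N M (zext L K u) (zext N M pt) x y
      + kronZ N M (zext L K v) pb (x - ((L*N : ℕ):ℤ)) y := by
  intro x y
  have hNz : (0:ℤ) < N := by exact_mod_cast hN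
  have hMz : (0:ℤ) < M := by exact_mod_cast hM
  by_cases hy : 0 ≤ y ∧ y < ((K*M : ℕ):ℤ)
  · -- column in range; get k,m decomposition
    have hk0 : 0 ≤ y / (M:ℤ) := Int.ediv_nonneg hy.1 (le_of_lt hMz)
    have hkK : y / (M:ℤ) < K := by
      rw [Int.ediv_lt_iff_lt_mul hMz]
      have : ((K*M : ℕ):ℤ) = (K:ℤ)*(M:ℤ) := by push_cast; ring
      omega
    have hm0 : 0 ≤ y % (M:ℤ) := Int.emod_nonneg y hMz.ne'
    have hmM : y % (M:ℤ) < M := Int.emod_lt_of_pos y hMz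
    have hyde := Int.mul_ediv_add_emod y M
    set ki : ℕ := (y / (M:ℤ)).toNat with hki
    set mi : ℕ := (y % (M:ℤ)).toNat with hmi
    have hkiv : (ki:ℤ) = y / (M:ℤ) := Int.toNat_of_nonneg hk0
    have hmiv : (mi:ℤ) = y % (M:ℤ) := Int.toNat_of_nonneg hm0
    have hkiK : ki < K := by omega
    have hmiM : mi < M := by omega
    by_cases hx1 : 0 ≤ x ∧ x < ((L*N : ℕ):ℤ)
    · -- top block
      have hl0 : 0 ≤ x / (N:ℤ) := Int.ediv_nonneg hx1.1 (le_of_lt hNz)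
      have hlL : x / (N:ℤ) < L := by
        rw [Int.ediv_lt_iff_lt_mul hNz]
        have : ((L*N : ℕ):ℤ) = (L:ℤ)*(N:ℤ) := by push_cast; ring
        omega
      have hn0 : 0 ≤ x % (N:ℤ) := Int.emod_nonneg x hNz.ne'
      have hnN : x % (N:ℤ) < N := Int.emod_lt_of_pos x hNz
      have hxde := Int.mul_ediv_add_emod x N
      set li : ℕ := (x / (N:ℤ)).toNat with hli
      set ni : ℕ := (x % (N:ℤ)).toNat with hni
      have hliv : (li:ℤ) = x / (N:ℤ) := Int.toNat_of_nonneg hl0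
      have hniv : (ni:ℤ) = x % (N:ℤ) := Int.toNat_of_nonneg hn0
      have hliL : li < L := by omega
      have hniN : ni < N := by omega
      have hxt : x.toNat = li*N + ni := by
        have hNli : (N:ℤ) * (x / (N:ℤ)) = (N:ℤ) * (li:ℤ) := by rw [hliv]
        have hprod : ((li*N : ℕ):ℤ) = (N:ℤ) * (li:ℤ) := by push_cast; ring
        omega
      have hyt : y.toNat = ki*M + mi := by
        have hMk : (M:ℤ) * (y / (M:ℤ)) = (M:ℤ) * (ki:ℤ) := by rw [hkiv]
        have hprod : ((ki*M : ℕ):ℤ) = (M:ℤ) * (ki:ℤ) := by push_cast; ring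
        omega
      have hzl : zext (2*(L*N)) (K*M) W x y = u li ki * pt ni mi := by
        unfold zext
        rw [if_pos (by
          have : ((2*(L*N) : ℕ):ℤ) = 2*((L*N : ℕ):ℤ) := by push_cast; ring
          omega)]
        rw [hxt, hyt]
        exact h1 li hliL ki hkiK ni hniN mi hmiM
      have hk1 : kronZ N M (zext L K u) (zext N M pt) x y = u li ki * pt ni mi := by
        unfold kronZ zext
        rw [if_pos (by omega), if_pos (by omega)]
      have hk2 : kronZ N M (zext L K v) pb (x - ((L*N : ℕ):ℤ)) y = 0 :=
        kron_row_lo L K N M hN _ pb (zext_supp L K v) _ y (by omega)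
      rw [hzl, hk1, hk2, add_zero]
    · by_cases hx2 : 0 ≤ x - ((L*N : ℕ):ℤ) ∧ x - ((L*N : ℕ):ℤ) < ((L*N : ℕ):ℤ)
      · -- bottom block
        set x' : ℤ := x - ((L*N : ℕ):ℤ) with hx'
        have hl0 : 0 ≤ x' / (N:ℤ) := Int.ediv_nonneg hx2.1 (le_of_lt hNz)
        have hlL : x' / (N:ℤ) < L := by
          rw [Int.ediv_lt_iff_lt_mul hNz]
          have : ((L*N : ℕ):ℤ) = (L:ℤ)*(N:ℤ) := by push_cast; ring
          omega
        have hn0 : 0 ≤ x' % (N:ℤ) := Int.emod_nonneg x' hNz.ne'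
        have hnN : x' % (N:ℤ) < N := Int.emod_lt_of_pos x' hNz
        have hxde := Int.mul_ediv_add_emod x' N
        set li : ℕ := (x' / (N:ℤ)).toNat with hli
        set ni : ℕ := (x' % (N:ℤ)).toNat with hni
        have hliv : (li:ℤ) = x' / (N:ℤ) := Int.toNat_of_nonneg hl0
        have hniv : (ni:ℤ) = x' % (N:ℤ) := Int.toNat_of_nonneg hn0
        have hliL : li < L := by omega
        have hniN : ni < N := by omega
        have hxt : x.toNat = L*N + li*N + ni := by
          have hNli : (N:ℤ) * (x' / (N:ℤ)) = (N:ℤ) * (li:ℤ) := by rw [hliv]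
          have hprod : ((li*N : ℕ):ℤ) = (N:ℤ) * (li:ℤ) := by push_cast; ring
          have hprod2 : ((L*N + li*N + ni : ℕ):ℤ) = ((L*N:ℕ):ℤ) + ((li*N:ℕ):ℤ) + ni := by
            push_cast; ring
          omega
        have hyt : y.toNat = ki*M + mi := by
          have hMk : (M:ℤ) * (y / (M:ℤ)) = (M:ℤ) * (ki:ℤ) := by rw [hkiv]
          have hprod : ((ki*M : ℕ):ℤ) = (M:ℤ) * (ki:ℤ) := by push_cast; ring
          omega
        have hzl : zext (2*(L*N)) (K*M) W x y = v li ki * pb ((ni:ℕ):ℤ) ((mi:ℕ):ℤ) := by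
          unfold zext
          rw [if_pos (by
            have : ((2*(L*N) : ℕ):ℤ) = 2*((L*N : ℕ):ℤ) := by push_cast; ring
            omega)]
          rw [hxt, hyt]
          exact h2 li hliL ki hkiK ni hniN mi hmiM
        have hk1 : kronZ N M (zext L K u) (zext N M pt) x y = 0 :=
          kron_row_hi L K N M hN _ _ (zext_supp L K u) x y (by omega)
        have hk2 : kronZ N M (zext L K v) pb x' y = v li ki * pb ((ni:ℕ):ℤ) ((mi:ℕ):ℤ) := by
          unfold kronZ zext
          rw [if_pos (by omega), ← hniv, ← hmiv]
        rw [hzl, hk1, hk2, zero_add]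
      · -- rows out of range
        have hout : x < 0 ∨ ((2*(L*N) : ℕ):ℤ) ≤ x := by
          have : ((2*(L*N) : ℕ):ℤ) = 2*((L*N : ℕ):ℤ) := by push_cast; ring
          omega
        have hzl : zext (2*(L*N)) (K*M) W x y = 0 := by
          unfold zext
          rw [if_neg (by omega)]
        have hk1 : kronZ N M (zext L K u) (zext N M pt) x y = 0 := by
          rcases hout with h | h
          · exact kron_row_lo L K N M hN _ _ (zext_supp L K u) x y h
          · refine kron_row_hi L K N M hN _ _ (zext_supp L K u) x y ?_
            have : ((2*(L*N) : ℕ):ℤ) = 2*((L*N : ℕ):ℤ) := by push_cast; ring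
            omega
        have hk2 : kronZ N M (zext L K v) pb (x - ((L*N : ℕ):ℤ)) y = 0 := by
          rcases hout with h | h
          · exact kron_row_lo L K N M hN _ _ (zext_supp L K v) _ y (by omega)
          · refine kron_row_hi L K N M hN _ _ (zext_supp L K v) _ y ?_
            have : ((2*(L*N) : ℕ):ℤ) = 2*((L*N : ℕ):ℤ) := by push_cast; ring
            omega
        rw [hzl, hk1, hk2, add_zero]
  · -- column out of range
    have hzl : zext (2*(L*N)) (K*M) W x y = 0 := by
      unfold zext
      rw [if_neg (by omega)]
    have hcol : ∀ u' : ℤ → ℤ → ℂ, Supp L K u' → ∀ x0 : ℤ, kronZ N M u' pb x0 y = 0 ∧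
        kronZ N M u' (zext N M pt) x0 y = 0 := by
      intro u' hu' x0
      have : ¬(0 ≤ y / (M:ℤ) ∧ y / (M:ℤ) < (K:ℤ)) := by
        rcases (by omega : y < 0 ∨ ((K*M : ℕ):ℤ) ≤ y) with h | h
        · have : y / (M:ℤ) < 0 := Int.ediv_neg_of_neg_of_pos h hMz
          omega
        · have : (K:ℤ) ≤ y / (M:ℤ) := by
            rw [Int.le_ediv_iff_mul_le hMz]
            push_cast at h
            linarith
          omega
      constructor <;>
        · unfold kronZ
          rw [hu' _ _ (by tauto), zero_mul]
    rw [hzl, (hcol _ (zext_supp L K u) x).2, (hcol _ (zext_supp L K v) _).1, add_zero]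

lemma zext_neg (L K : ℕ) (V : ℕ → ℕ → ℂ) :
    zext L K (fun l k => -(V l k)) = fun x y => -(zext L K V x y) := by
  funext x y
  unfold zext
  by_cases h : 0 ≤ x ∧ x < (L:ℤ) ∧ 0 ≤ y ∧ y < (K:ℤ)
  · rw [if_pos h, if_pos h]
  · rw [if_neg h, if_neg h, neg_zero]

lemma kron_neg_left (N M : ℕ) (u p : ℤ → ℤ → ℂ) :
    kronZ N M (fun x y => -(u x y)) p = fun x y => -(kronZ N M u p x y) := by
  funext x y
  unfold kronZ
  rw [neg_mul]

lemma corBox_block (H C : ℕ) (t bt : ℤ → ℤ → ℂ)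
    (ht : ∀ x y : ℤ, ((H:ℕ):ℤ) ≤ x → t x y = 0)
    (hb : ∀ x y : ℤ, x < 0 → bt x y = 0) (τn τm : ℤ) :
    corBox (2*H) C (fun x y => t x y + bt (x - ((H:ℕ):ℤ)) y)
        (fun x y => t x y + bt (x - ((H:ℕ):ℤ)) y) τn τm
      = corBox H C t t τn τm + corBox H C t bt (τn - (H:ℤ)) τm
      + corBox H C bt t (τn + (H:ℤ)) τm + corBox H C bt bt τn τm := by
  rw [corBox_add_left]
  rw [corBox_add_right, corBox_add_right]
  have e1 : corBox (2*H) C t t τn τm = corBox H C t t τn τm := corBox_extend H C t t ht τn τm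
  have e2 : corBox (2*H) C t (fun x y => bt (x - ((H:ℕ):ℤ)) y) τn τm
      = corBox H C t bt (τn - (H:ℤ)) τm := by
    rw [corBox_shift_g (2*H) C H t bt τn τm, corBox_extend H C t bt ht (τn - (H:ℤ)) τm]
  have e3 : corBox (2*H) C (fun x y => bt (x - ((H:ℕ):ℤ)) y) t τn τm
      = corBox H C bt t (τn + (H:ℤ)) τm := corBox_shift_f H C bt t hb τn τm
  have e4 : corBox (2*H) C (fun x y => bt (x - ((H:ℕ):ℤ)) y)
      (fun x y => bt (x - ((H:ℕ):ℤ)) y) τn τm = corBox H C bt bt τn τm := by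
    rw [corBox_shift_g (2*H) C H _ bt τn τm, corBox_shift_f H C bt bt hb (τn - (H:ℤ)) τm,
      sub_add_cancel]
  rw [e1, e2, e3, e4]
  ring

/-- Golay-array-pair closure under two-dimensional expansion: expanding a Golay
complementary array pair of unimodular protoarray weights by a Golay complementary
array pair of unimodular expanders yields again a Golay complementary array pair of
unimodular `2LN × KM` matrices. -/
theorem golay_array_pair_closure_expansion (L K N M : ℕ)
    (hL : 1 ≤ L) (hK : 1 ≤ K) (hN : 1 ≤ N) (hM : 1 ≤ M)
    (U V WPA WPB WA WB : ℕ → ℕ → ℂ)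
    (hU : ∀ l < L, ∀ k < K, ‖U l k‖ = 1)
    (hV : ∀ l < L, ∀ k < K, ‖V l k‖ = 1)
    (hGolayUV : IsGolayArrayPair L K U V)
    (hWPA : ∀ n < N, ∀ m < M, ‖WPA n m‖ = 1)
    (hWPB : ∀ n < N, ∀ m < M, ‖WPB n m‖ = 1)
    (hGolayP : IsGolayArrayPair N M WPA WPB)
    (hA1 : ∀ l < L, ∀ k < K, ∀ n < N, ∀ m < M,
      WA (l * N + n) (k * M + m) = U l k * WPA n m)
    (hA2 : ∀ l < L, ∀ k < K, ∀ n < N, ∀ m < M,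
      WA (L * N + l * N + n) (k * M + m) =
        -(V l k * (starRingEnd ℂ) (WPB (N - 1 - n) (M - 1 - m))))
    (hB1 : ∀ l < L, ∀ k < K, ∀ n < N, ∀ m < M,
      WB (l * N + n) (k * M + m) = U l k * WPB n m)
    (hB2 : ∀ l < L, ∀ k < K, ∀ n < N, ∀ m < M,
      WB (L * N + l * N + n) (k * M + m) =
        V l k * (starRingEnd ℂ) (WPA (N - 1 - n) (M - 1 - m))) :
    (∀ n < 2 * L * N, ∀ m < K * M,
        ‖WA n m‖ = 1 ∧ ‖WB n m‖ = 1) ∧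
      IsGolayArrayPair (2 * L * N) (K * M) WA WB := by
  have hN0 : 0 < N := hN
  have hM0 : 0 < M := hM
  constructor
  · -- unimodularity
    intro n hn m hm
    have hMk : m / M < K := by rw [Nat.div_lt_iff_lt_mul hM0]; exact hm
    have hMm : m % M < M := Nat.mod_lt _ hM0
    have hmeq : m = (m/M)*M + m%M := by
      have h1 := Nat.div_add_mod m M
      have h2 : (m/M)*M = M*(m/M) := Nat.mul_comm _ _
      omega
    by_cases hn1 : n < L*N
    · have hNl : n / N < L := by rw [Nat.div_lt_iff_lt_mul hN0]; exact hn1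
      have hNn : n % N < N := Nat.mod_lt _ hN0
      have hneq : n = (n/N)*N + n%N := by
        have h1 := Nat.div_add_mod n N
        have h2 : (n/N)*N = N*(n/N) := Nat.mul_comm _ _
        omega
      rw [hneq, hmeq, hA1 _ hNl _ hMk _ hNn _ hMm, hB1 _ hNl _ hMk _ hNn _ hMm]
      constructor
      · rw [norm_mul, hU _ hNl _ hMk, hWPA _ hNn _ hMm, one_mul]
      · rw [norm_mul, hU _ hNl _ hMk, hWPB _ hNn _ hMm, one_mul]
    · have hr : n - L*N < L*N := by
        have h3 : 2*L*N = L*N + L*N := by ring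
        omega
      have hl : (n - L*N) / N < L := by rw [Nat.div_lt_iff_lt_mul hN0]; exact hr
      have hn' : (n - L*N) % N < N := Nat.mod_lt _ hN0
      have hneq : n = L*N + ((n - L*N)/N)*N + (n - L*N)%N := by
        have h1 := Nat.div_add_mod (n - L*N) N
        have h2 : ((n - L*N)/N)*N = N*((n - L*N)/N) := Nat.mul_comm _ _
        omega
      rw [hneq, hmeq, hA2 _ hl _ hMk _ hn' _ hMm, hB2 _ hl _ hMk _ hn' _ hMm]
      constructor
      · rw [norm_neg, norm_mul, Complex.norm_conj, hV _ hl _ hMk,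
          hWPB _ (by omega) _ (by omega), one_mul]
      · rw [norm_mul, Complex.norm_conj, hV _ hl _ hMk,
          hWPA _ (by omega) _ (by omega), one_mul]
  · -- Golay property
    intro τn τm hτn hτm hne
    have hsz : 2*L*N = 2*(L*N) := by ring
    rw [hsz, aacf2_eq_corBox, aacf2_eq_corBox]
    have hNze : ((N:ℤ)) ≠ 0 := by exact_mod_cast hN0.ne'
    have hNzp : (0:ℤ) < N := by exact_mod_cast hN0
    have hMze : ((M:ℤ)) ≠ 0 := by exact_mod_cast hM0.ne'
    have hMzp : (0:ℤ) < M := by exact_mod_cast hM0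
    -- decompositions
    have hA2' : ∀ l, l < L → ∀ k, k < K → ∀ n, n < N → ∀ m, m < M →
        WA (L*N + l*N + n) (k*M+m)
          = (fun l k => -(V l k)) l k
            * (revZ N M (zext N M WPB)) ((n:ℕ):ℤ) ((m:ℕ):ℤ) := by
      intro l hl k hk n hn m hm
      have hrv : (revZ N M (zext N M WPB)) ((n:ℕ):ℤ) ((m:ℕ):ℤ)
          = (starRingEnd ℂ) (WPB (N-1-n) (M-1-m)) := by
        unfold revZ zext
        rw [if_pos (by omega)]
        rw [show ((N:ℤ)-1-((n:ℕ):ℤ)).toNat = N-1-n by omega,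
          show ((M:ℤ)-1-((m:ℕ):ℤ)).toNat = M-1-m by omega]
      rw [hrv, hA2 l hl k hk n hn m hm]
      ring
    have hB2' : ∀ l, l < L → ∀ k, k < K → ∀ n, n < N → ∀ m, m < M →
        WB (L*N + l*N + n) (k*M+m)
          = V l k * (revZ N M (zext N M WPA)) ((n:ℕ):ℤ) ((m:ℕ):ℤ) := by
      intro l hl k hk n hn m hm
      have hrv : (revZ N M (zext N M WPA)) ((n:ℕ):ℤ) ((m:ℕ):ℤ)
          = (starRingEnd ℂ) (WPA (N-1-n) (M-1-m)) := by
        unfold revZ zext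
        rw [if_pos (by omega)]
        rw [show ((N:ℤ)-1-((n:ℕ):ℤ)).toNat = N-1-n by omega,
          show ((M:ℤ)-1-((m:ℕ):ℤ)).toNat = M-1-m by omega]
      rw [hrv, hB2 l hl k hk n hn m hm]
    have hdA := zext_block L K N M hN0 hM0 WA U (fun l k => -(V l k)) WPA
      (revZ N M (zext N M WPB)) (revZ_supp N M _ (zext_supp N M WPB)) hA1 hA2'
    have hdB := zext_block L K N M hN0 hM0 WB U V WPB
      (revZ N M (zext N M WPA)) (revZ_supp N M _ (zext_supp N M WPA)) hB1 hB2'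
    have hfunA : zext (2*(L*N)) (K*M) WA
        = fun x y => kronZ N M (zext L K U) (zext N M WPA) x y
          + (fun x y => -(kronZ N M (zext L K V) (revZ N M (zext N M WPB)) x y))
              (x - ((L*N : ℕ):ℤ)) y := by
      funext x y
      rw [hdA x y, zext_neg, kron_neg_left]
    have hfunB : zext (2*(L*N)) (K*M) WB
        = fun x y => kronZ N M (zext L K U) (zext N M WPB) x y
          + (kronZ N M (zext L K V) (revZ N M (zext N M WPA))) (x - ((L*N : ℕ):ℤ)) y := by
      funext x y
      rw [hdB x y]
    have hhiU_A : ∀ x y : ℤ, ((L*N : ℕ):ℤ) ≤ x →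
        kronZ N M (zext L K U) (zext N M WPA) x y = 0 :=
      kron_row_hi L K N M hN0 _ _ (zext_supp L K U)
    have hhiU_B : ∀ x y : ℤ, ((L*N : ℕ):ℤ) ≤ x →
        kronZ N M (zext L K U) (zext N M WPB) x y = 0 :=
      kron_row_hi L K N M hN0 _ _ (zext_supp L K U)
    have hloV_A : ∀ x y : ℤ, x < 0 →
        (fun x y => -(kronZ N M (zext L K V) (revZ N M (zext N M WPB)) x y)) x y = 0 := by
      intro x y hx
      show -(kronZ N M (zext L K V) (revZ N M (zext N M WPB)) x y) = 0
      rw [kron_row_lo L K N M hN0 _ _ (zext_supp L K V) x y hx, neg_zero]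
    have hloV_B : ∀ x y : ℤ, x < 0 →
        kronZ N M (zext L K V) (revZ N M (zext N M WPA)) x y = 0 :=
      kron_row_lo L K N M hN0 _ _ (zext_supp L K V)
    have hcorA : corBox (2*(L*N)) (K*M) (zext (2*(L*N)) (K*M) WA)
          (zext (2*(L*N)) (K*M) WA) τn τm
        = corBox (L*N) (K*M) (kronZ N M (zext L K U) (zext N M WPA))
            (kronZ N M (zext L K U) (zext N M WPA)) τn τm
        - corBox (L*N) (K*M) (kronZ N M (zext L K U) (zext N M WPA))
            (kronZ N M (zext L K V) (revZ N M (zext N M WPB))) (τn - ((L*N : ℕ):ℤ)) τm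
        - corBox (L*N) (K*M) (kronZ N M (zext L K V) (revZ N M (zext N M WPB)))
            (kronZ N M (zext L K U) (zext N M WPA)) (τn + ((L*N : ℕ):ℤ)) τm
        + corBox (L*N) (K*M) (kronZ N M (zext L K V) (revZ N M (zext N M WPB)))
            (kronZ N M (zext L K V) (revZ N M (zext N M WPB))) τn τm := by
      rw [hfunA]
      rw [corBox_block (L*N) (K*M)
        (kronZ N M (zext L K U) (zext N M WPA))
        (fun x y => -(kronZ N M (zext L K V) (revZ N M (zext N M WPB)) x y))
        hhiU_A hloV_A τn τm]
      rw [corBox_neg_right (L*N) (K*M)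
          (kronZ N M (zext L K U) (zext N M WPA))
          (kronZ N M (zext L K V) (revZ N M (zext N M WPB))) (τn - ((L*N : ℕ):ℤ)) τm,
        corBox_neg_left (L*N) (K*M)
          (kronZ N M (zext L K V) (revZ N M (zext N M WPB)))
          (kronZ N M (zext L K U) (zext N M WPA)) (τn + ((L*N : ℕ):ℤ)) τm,
        corBox_neg_left (L*N) (K*M)
          (kronZ N M (zext L K V) (revZ N M (zext N M WPB)))
          (fun x y => -(kronZ N M (zext L K V) (revZ N M (zext N M WPB)) x y)) τn τm,
        corBox_neg_right (L*N) (K*M)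
          (kronZ N M (zext L K V) (revZ N M (zext N M WPB)))
          (kronZ N M (zext L K V) (revZ N M (zext N M WPB))) τn τm]
      ring
    have hcorB : corBox (2*(L*N)) (K*M) (zext (2*(L*N)) (K*M) WB)
          (zext (2*(L*N)) (K*M) WB) τn τm
        = corBox (L*N) (K*M) (kronZ N M (zext L K U) (zext N M WPB))
            (kronZ N M (zext L K U) (zext N M WPB)) τn τm
        + corBox (L*N) (K*M) (kronZ N M (zext L K U) (zext N M WPB))
            (kronZ N M (zext L K V) (revZ N M (zext N M WPA))) (τn - ((L*N : ℕ):ℤ)) τm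
        + corBox (L*N) (K*M) (kronZ N M (zext L K V) (revZ N M (zext N M WPA)))
            (kronZ N M (zext L K U) (zext N M WPB)) (τn + ((L*N : ℕ):ℤ)) τm
        + corBox (L*N) (K*M) (kronZ N M (zext L K V) (revZ N M (zext N M WPA)))
            (kronZ N M (zext L K V) (revZ N M (zext N M WPA))) τn τm := by
      rw [hfunB]
      exact corBox_block (L*N) (K*M)
        (kronZ N M (zext L K U) (zext N M WPB))
        (kronZ N M (zext L K V) (revZ N M (zext N M WPA)))
        hhiU_B hloV_B τn τm
    -- expand the eight block correlations via the Kronecker factorization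
    have kTTA := kron_corr L K N M hN0 hM0 (zext L K U) (zext L K U)
      (zext N M WPA) (zext N M WPA) (zext_supp N M WPA) τn τm
    have kTTB := kron_corr L K N M hN0 hM0 (zext L K U) (zext L K U)
      (zext N M WPB) (zext N M WPB) (zext_supp N M WPB) τn τm
    have kBBA := kron_corr L K N M hN0 hM0 (zext L K V) (zext L K V)
      (revZ N M (zext N M WPB)) (revZ N M (zext N M WPB))
      (revZ_supp N M _ (zext_supp N M WPB)) τn τm
    have kBBB := kron_corr L K N M hN0 hM0 (zext L K V) (zext L K V)
      (revZ N M (zext N M WPA)) (revZ N M (zext N M WPA))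
      (revZ_supp N M _ (zext_supp N M WPA)) τn τm
    have kTBA := kron_corr L K N M hN0 hM0 (zext L K U) (zext L K V)
      (zext N M WPA) (revZ N M (zext N M WPB))
      (revZ_supp N M _ (zext_supp N M WPB)) (τn - ((L*N : ℕ):ℤ)) τm
    have kTBB := kron_corr L K N M hN0 hM0 (zext L K U) (zext L K V)
      (zext N M WPB) (revZ N M (zext N M WPA))
      (revZ_supp N M _ (zext_supp N M WPA)) (τn - ((L*N : ℕ):ℤ)) τm
    have kBTA := kron_corr L K N M hN0 hM0 (zext L K V) (zext L K U)
      (revZ N M (zext N M WPB)) (zext N M WPA)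
      (zext_supp N M WPA) (τn + ((L*N : ℕ):ℤ)) τm
    have kBTB := kron_corr L K N M hN0 hM0 (zext L K V) (zext L K U)
      (revZ N M (zext N M WPA)) (zext N M WPB)
      (zext_supp N M WPB) (τn + ((L*N : ℕ):ℤ)) τm
    -- complementarity of the protoarray pair
    have hSP : ∀ s t : ℤ,
        corBox N M (zext N M WPA) (zext N M WPA) s t
          + corBox N M (zext N M WPB) (zext N M WPB) s t
        = (if s = 0 ∧ t = 0 then (N:ℂ)*(M:ℂ) + (N:ℂ)*(M:ℂ) else 0) := by
      intro s t
      by_cases h0 : s = 0 ∧ t = 0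
      · obtain ⟨rfl, rfl⟩ := h0
        rw [if_pos ⟨rfl, rfl⟩, corBox_self_zero N M WPA hWPA, corBox_self_zero N M WPB hWPB]
      · rw [if_neg h0]
        by_cases hin : |s| ≤ (N:ℤ)-1 ∧ |t| ≤ (M:ℤ)-1
        · rw [← aacf2_eq_corBox, ← aacf2_eq_corBox]
          exact hGolayP s t hin.1 hin.2 h0
        · rw [corBox_out N M _ _ (zext_supp N M WPA) s t hin,
            corBox_out N M _ _ (zext_supp N M WPB) s t hin, add_zero]
    have hSQ : ∀ s t : ℤ,
        corBox N M (revZ N M (zext N M WPB)) (revZ N M (zext N M WPB)) s t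
          + corBox N M (revZ N M (zext N M WPA)) (revZ N M (zext N M WPA)) s t
        = (if s = 0 ∧ t = 0 then (N:ℂ)*(M:ℂ) + (N:ℂ)*(M:ℂ) else 0) := by
      intro s t
      rw [corBox_rev_rev, corBox_rev_rev, ← map_add]
      rw [show corBox N M (zext N M WPB) (zext N M WPB) (-s) (-t)
            + corBox N M (zext N M WPA) (zext N M WPA) (-s) (-t)
          = corBox N M (zext N M WPA) (zext N M WPA) (-s) (-t)
            + corBox N M (zext N M WPB) (zext N M WPB) (-s) (-t) by ring]
      rw [hSP (-s) (-t)]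
      by_cases h0 : s = 0 ∧ t = 0
      · rw [if_pos (show (-s) = 0 ∧ (-t) = 0 by omega), if_pos h0, map_add, map_mul,
          Complex.conj_natCast, Complex.conj_natCast]
      · rw [if_neg (show ¬((-s) = 0 ∧ (-t) = 0) by omega), if_neg h0, map_zero]
    -- cross-term reflection identities
    have hX1 : ∀ s t : ℤ,
        corBox N M (zext N M WPA) (revZ N M (zext N M WPB)) s t
          = corBox N M (zext N M WPB) (revZ N M (zext N M WPA)) s t := by
      intro s t
      rw [corBox_rev_right, corBox_rev_right]
      exact Tsum_comm N M (zext N M WPA) (zext N M WPB)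
        (zext_supp N M WPA) (zext_supp N M WPB) _ _
    have hX2 : ∀ s t : ℤ,
        corBox N M (revZ N M (zext N M WPB)) (zext N M WPA) s t
          = corBox N M (revZ N M (zext N M WPA)) (zext N M WPB) s t := by
      intro s t
      rw [corBox_rev_left, corBox_rev_left]
      exact congrArg _ (Tsum_comm N M (zext N M WPB) (zext N M WPA)
        (zext_supp N M WPB) (zext_supp N M WPA) _ _)
    -- complementarity of the expander pair
    have hSU : ∀ s t : ℤ, ¬(s = 0 ∧ t = 0) →
        corBox L K (zext L K U) (zext L K U) s t
          + corBox L K (zext L K V) (zext L K V) s t = 0 := by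
      intro s t hst
      by_cases hin : |s| ≤ (L:ℤ)-1 ∧ |t| ≤ (K:ℤ)-1
      · rw [← aacf2_eq_corBox, ← aacf2_eq_corBox]
        exact hGolayUV s t hin.1 hin.2 hst
      · rw [corBox_out L K _ _ (zext_supp L K U) s t hin,
          corBox_out L K _ _ (zext_supp L K V) s t hin, add_zero]
    -- bounds of the remainders
    have hb0 : 0 ≤ τn % (N:ℤ) := Int.emod_nonneg τn hNze
    have hbN : τn % (N:ℤ) < (N:ℤ) := Int.emod_lt_of_pos τn hNzp
    have hd0 : 0 ≤ τm % (M:ℤ) := Int.emod_nonneg τm hMze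
    have hdM : τm % (M:ℤ) < (M:ℤ) := Int.emod_lt_of_pos τm hMzp
    have hsp1 := hSP (τn % (N:ℤ)) (τm % (M:ℤ))
    have hsp2 : corBox N M (zext N M WPA) (zext N M WPA) (τn % (N:ℤ)) (τm % (M:ℤ) - (M:ℤ))
        + corBox N M (zext N M WPB) (zext N M WPB) (τn % (N:ℤ)) (τm % (M:ℤ) - (M:ℤ)) = 0 := by
      rw [hSP]; exact if_neg (by rintro ⟨h1, h2⟩; omega)
    have hsp3 : corBox N M (zext N M WPA) (zext N M WPA) (τn % (N:ℤ) - (N:ℤ)) (τm % (M:ℤ))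
        + corBox N M (zext N M WPB) (zext N M WPB) (τn % (N:ℤ) - (N:ℤ)) (τm % (M:ℤ)) = 0 := by
      rw [hSP]; exact if_neg (by rintro ⟨h1, h2⟩; omega)
    have hsp4 : corBox N M (zext N M WPA) (zext N M WPA) (τn % (N:ℤ) - (N:ℤ)) (τm % (M:ℤ) - (M:ℤ))
        + corBox N M (zext N M WPB) (zext N M WPB) (τn % (N:ℤ) - (N:ℤ)) (τm % (M:ℤ) - (M:ℤ)) = 0 := by
      rw [hSP]; exact if_neg (by rintro ⟨h1, h2⟩; omega)
    have hsq1 := hSQ (τn % (N:ℤ)) (τm % (M:ℤ))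
    have hsq2 : corBox N M (revZ N M (zext N M WPB)) (revZ N M (zext N M WPB)) (τn % (N:ℤ)) (τm % (M:ℤ) - (M:ℤ))
        + corBox N M (revZ N M (zext N M WPA)) (revZ N M (zext N M WPA)) (τn % (N:ℤ)) (τm % (M:ℤ) - (M:ℤ)) = 0 := by
      rw [hSQ]; exact if_neg (by rintro ⟨h1, h2⟩; omega)
    have hsq3 : corBox N M (revZ N M (zext N M WPB)) (revZ N M (zext N M WPB)) (τn % (N:ℤ) - (N:ℤ)) (τm % (M:ℤ))
        + corBox N M (revZ N M (zext N M WPA)) (revZ N M (zext N M WPA)) (τn % (N:ℤ) - (N:ℤ)) (τm % (M:ℤ)) = 0 := by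
      rw [hSQ]; exact if_neg (by rintro ⟨h1, h2⟩; omega)
    have hsq4 : corBox N M (revZ N M (zext N M WPB)) (revZ N M (zext N M WPB)) (τn % (N:ℤ) - (N:ℤ)) (τm % (M:ℤ) - (M:ℤ))
        + corBox N M (revZ N M (zext N M WPA)) (revZ N M (zext N M WPA)) (τn % (N:ℤ) - (N:ℤ)) (τm % (M:ℤ) - (M:ℤ)) = 0 := by
      rw [hSQ]; exact if_neg (by rintro ⟨h1, h2⟩; omega)
    have hKey : (corBox L K (zext L K U) (zext L K U) (τn / (N:ℤ)) (τm / (M:ℤ))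
          + corBox L K (zext L K V) (zext L K V) (τn / (N:ℤ)) (τm / (M:ℤ)))
        * (if τn % (N:ℤ) = 0 ∧ τm % (M:ℤ) = 0 then (N:ℂ)*(M:ℂ) + (N:ℂ)*(M:ℂ) else 0)
        = 0 := by
      by_cases hbd : τn % (N:ℤ) = 0 ∧ τm % (M:ℤ) = 0
      · rw [hSU (τn / (N:ℤ)) (τm / (M:ℤ)) ?_, zero_mul]
        rintro ⟨h1, h2⟩
        apply hne
        constructor
        · have h3 := Int.mul_ediv_add_emod τn (N:ℤ)
          rw [h1, mul_zero] at h3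
          omega
        · have h3 := Int.mul_ediv_add_emod τm (M:ℤ)
          rw [h2, mul_zero] at h3
          omega
      · rw [if_neg hbd, mul_zero]
    rw [hcorA, hcorB]
    linear_combination kTTA + kTTB + kBBA + kBBB - kTBA + kTBB - kBTA + kBTB
      + (corBox L K (zext L K U) (zext L K U) (τn/(N:ℤ)) (τm/(M:ℤ))) * hsp1
      + (corBox L K (zext L K U) (zext L K U) (τn/(N:ℤ)) (τm/(M:ℤ) + 1)) * hsp2
      + (corBox L K (zext L K U) (zext L K U) (τn/(N:ℤ) + 1) (τm/(M:ℤ))) * hsp3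
      + (corBox L K (zext L K U) (zext L K U) (τn/(N:ℤ) + 1) (τm/(M:ℤ) + 1)) * hsp4
      + (corBox L K (zext L K V) (zext L K V) (τn/(N:ℤ)) (τm/(M:ℤ))) * hsq1
      + (corBox L K (zext L K V) (zext L K V) (τn/(N:ℤ)) (τm/(M:ℤ) + 1)) * hsq2
      + (corBox L K (zext L K V) (zext L K V) (τn/(N:ℤ) + 1) (τm/(M:ℤ))) * hsq3
      + (corBox L K (zext L K V) (zext L K V) (τn/(N:ℤ) + 1) (τm/(M:ℤ) + 1)) * hsq4
      - (corBox L K (zext L K U) (zext L K V) ((τn - ((L*N:ℕ):ℤ))/(N:ℤ)) (τm/(M:ℤ)))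
          * hX1 ((τn - ((L*N:ℕ):ℤ)) % (N:ℤ)) (τm % (M:ℤ))
      - (corBox L K (zext L K U) (zext L K V) ((τn - ((L*N:ℕ):ℤ))/(N:ℤ)) (τm/(M:ℤ) + 1))
          * hX1 ((τn - ((L*N:ℕ):ℤ)) % (N:ℤ)) (τm % (M:ℤ) - (M:ℤ))
      - (corBox L K (zext L K U) (zext L K V) ((τn - ((L*N:ℕ):ℤ))/(N:ℤ) + 1) (τm/(M:ℤ)))
          * hX1 ((τn - ((L*N:ℕ):ℤ)) % (N:ℤ) - (N:ℤ)) (τm % (M:ℤ))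
      - (corBox L K (zext L K U) (zext L K V) ((τn - ((L*N:ℕ):ℤ))/(N:ℤ) + 1) (τm/(M:ℤ) + 1))
          * hX1 ((τn - ((L*N:ℕ):ℤ)) % (N:ℤ) - (N:ℤ)) (τm % (M:ℤ) - (M:ℤ))
      - (corBox L K (zext L K V) (zext L K U) ((τn + ((L*N:ℕ):ℤ))/(N:ℤ)) (τm/(M:ℤ)))
          * hX2 ((τn + ((L*N:ℕ):ℤ)) % (N:ℤ)) (τm % (M:ℤ))
      - (corBox L K (zext L K V) (zext L K U) ((τn + ((L*N:ℕ):ℤ))/(N:ℤ)) (τm/(M:ℤ) + 1))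
          * hX2 ((τn + ((L*N:ℕ):ℤ)) % (N:ℤ)) (τm % (M:ℤ) - (M:ℤ))
      - (corBox L K (zext L K V) (zext L K U) ((τn + ((L*N:ℕ):ℤ))/(N:ℤ) + 1) (τm/(M:ℤ)))
          * hX2 ((τn + ((L*N:ℕ):ℤ)) % (N:ℤ) - (N:ℤ)) (τm % (M:ℤ))
      - (corBox L K (zext L K V) (zext L K U) ((τn + ((L*N:ℕ):ℤ))/(N:ℤ) + 1) (τm/(M:ℤ) + 1))
          * hX2 ((τn + ((L*N:ℕ):ℤ)) % (N:ℤ) - (N:ℤ)) (τm % (M:ℤ) - (M:ℤ))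
      + hKey
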